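/- Let C = {i·p^j : i ∈ S, 0 ≤ j ≤ a-1} with S a finite set of positive integers coprime to p, and suppose ν = p^k - 1 ∈ S is the unique element of maximal base-p digit sum, with k dividing a. Then M_C((p^a - 1)·ℓ) = a(p-1)/s_p(ν) = a/k if and only if ℓ ∈ {1, p, p^2, ..., p^{k-1}}. -/

import Mathlib

/-- Sum of the base-`p` digits of `n`. -/
def digitSum (p n : ℕ) : ℕ := (Nat.digits p n).sum

/-- `IsRepr p a S N m` : `N` can be written as a sum of `m` coins (with repetition)
from the coin set `{i * p^j : i ∈ S, 0 ≤ j ≤ a-1}`. -/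
def IsRepr (p a : ℕ) (S : Finset ℕ) (N m : ℕ) : Prop :=
  ∃ t : ℕ → ℕ → ℕ,
    (∑ i ∈ S, ∑ j ∈ Finset.range a, t i j * (i * p ^ j)) = N ∧
    (∑ i ∈ S, ∑ j ∈ Finset.range a, t i j) = m

/-- The minimal number of coins from the coin set needed to sum to `N`. -/
noncomputable def MC (p a : ℕ) (S : Finset ℕ) (N : ℕ) : ℕ :=
  sInf {m | IsRepr p a S N m}

section
variable {p : ℕ}

lemma ds_legendre (hp : p.Prime) (n : ℕ) :
    digitSum p n + (p - 1) * padicValNat p (Nat.factorial n) = n := by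
  haveI := Fact.mk hp
  have h1 := sub_one_mul_padicValNat_factorial (p := p) n
  have h2 := Nat.digit_sum_le p n
  unfold digitSum
  omega

lemma ds_add (hp : p.Prime) (x y : ℕ) :
    digitSum p (x + y) + (p - 1) * padicValNat p ((x + y).choose x) =
      digitSum p x + digitSum p y := by
  haveI := Fact.mk hp
  have hfac : (x + y).choose x * (Nat.factorial x * Nat.factorial y) = Nat.factorial (x + y) := by
    have := Nat.choose_mul_factorial_mul_factorial (Nat.le_add_right x y)
    simpa [Nat.add_sub_cancel_left, mul_assoc] using this
  have hv : padicValNat p (Nat.factorial (x + y)) =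
      padicValNat p ((x + y).choose x) + (padicValNat p (Nat.factorial x) + padicValNat p (Nat.factorial y)) := by
    rw [← hfac, padicValNat.mul (Nat.choose_pos (Nat.le_add_right x y)).ne'
      (by positivity), padicValNat.mul (Nat.factorial_ne_zero x) (Nat.factorial_ne_zero y)]
  have l1 := ds_legendre hp x
  have l2 := ds_legendre hp y
  have l3 := ds_legendre hp (x + y)
  rw [hv, Nat.mul_add, Nat.mul_add] at l3
  omega

lemma ds_add_le (hp : p.Prime) (x y : ℕ) :
    digitSum p (x + y) ≤ digitSum p x + digitSum p y := by
  have := ds_add hp x y; omega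

lemma ds_add_eq_nocarry (hp : p.Prime) {x y : ℕ}
    (h : digitSum p (x + y) = digitSum p x + digitSum p y) (i : ℕ) :
    (x + y) / p ^ i = x / p ^ i + y / p ^ i := by
  haveI := Fact.mk hp
  have hp2 := hp.two_le
  have hv : padicValNat p ((x + y).choose x) = 0 := by
    have h1 := ds_add hp x y
    have h2 : (p - 1) * padicValNat p ((x + y).choose x) = 0 := by omega
    rcases Nat.mul_eq_zero.mp h2 with h3 | h3
    · omega
    · exact h3
  have hlt : x % p ^ i + y % p ^ i < p ^ i := by
    rcases le_or_gt i (Nat.log p (x + y)) with hi | hi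
    · rcases Nat.eq_zero_or_pos i with rfl | hi0
      · simp; omega
      · have hk := padicValNat_choose' (p := p) (n := y) (k := x)
          (b := Nat.log p (x + y) + 1) (by rw [Nat.add_comm y x]; exact Nat.lt_succ_self _)
        rw [Nat.add_comm y x] at hk
        rw [hv] at hk
        have hmem : i ∈ Finset.Ico 1 (Nat.log p (x + y) + 1) := by
          simp [Finset.mem_Ico]; omega
        have hfe : Finset.filter (fun i => p ^ i ≤ x % p ^ i + y % p ^ i)
            (Finset.Ico 1 (Nat.log p (x + y) + 1)) = ∅ := Finset.card_eq_zero.mp hk.symm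
        have hni : ¬ (p ^ i ≤ x % p ^ i + y % p ^ i) := fun hcon =>
          Finset.notMem_empty i (hfe ▸ Finset.mem_filter.mpr ⟨hmem, hcon⟩)
        omega
    · have hxy : x + y < p ^ i := by
        calc x + y < p ^ (Nat.log p (x + y) + 1) := Nat.lt_pow_succ_log_self hp2 _
        _ ≤ p ^ i := Nat.pow_le_pow_right (by omega) (by omega)
      have := Nat.mod_le x (p ^ i)
      have := Nat.mod_le y (p ^ i)
      omega
  exact Nat.add_div_eq_of_add_mod_lt hlt

end

section
variable {p : ℕ}

lemma ds_zero : digitSum p 0 = 0 := by simp [digitSum]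

lemma ds_rec (hp2 : 2 ≤ p) (n : ℕ) : digitSum p n = n % p + digitSum p (n / p) := by
  rcases Nat.eq_zero_or_pos n with rfl | hn
  · simp [digitSum]
  · unfold digitSum
    rw [Nat.digits_def' (by omega : 1 < p) hn]
    simp

lemma ds_base (hp2 : 2 ≤ p) : ∀ (a q r : ℕ), r < p ^ a →
    digitSum p (q * p ^ a + r) = digitSum p q + digitSum p r := by
  intro a
  induction a with
  | zero =>
    intro q r hr
    have : r = 0 := by simpa using hr
    subst this; simp [ds_zero]
  | succ a ih =>
    intro q r hr
    have hp0 : 0 < p := by omega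
    rw [ds_rec hp2 (q * p ^ (a + 1) + r)]
    have h1 : q * p ^ (a + 1) + r = p * (q * p ^ a) + r := by ring
    have hmod : (q * p ^ (a + 1) + r) % p = r % p := by
      rw [h1, Nat.mul_add_mod]
    have hdiv : (q * p ^ (a + 1) + r) / p = q * p ^ a + r / p := by
      rw [h1, Nat.mul_add_div hp0]
    have hrp : r / p < p ^ a := by
      rw [Nat.div_lt_iff_lt_mul hp0]
      calc r < p ^ (a + 1) := hr
      _ = p ^ a * p := by ring
    rw [hmod, hdiv, ih q (r / p) hrp, ds_rec hp2 r]
    ring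

lemma ds_mul_pow (hp2 : 2 ≤ p) (q a : ℕ) : digitSum p (q * p ^ a) = digitSum p q := by
  have := ds_base hp2 a q 0 (by positivity)
  simpa [ds_zero] using this

lemma ds_pow_sub_one (hp2 : 2 ≤ p) (a : ℕ) : digitSum p (p ^ a - 1) = a * (p - 1) := by
  induction a with
  | zero => simp [ds_zero]
  | succ a ih =>
    have h1 : 1 ≤ p ^ a := Nat.one_le_pow _ _ (by omega)
    have h2 : p ^ (a + 1) = p * p ^ a := by ring
    have hsplit : p ^ (a + 1) - 1 = p * (p ^ a - 1) + (p - 1) := by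
      have : p * (p ^ a - 1) + p = p * p ^ a := by
        rw [← Nat.mul_succ]; congr 1; omega
      omega
    rw [ds_rec hp2 (p ^ (a + 1) - 1), hsplit, Nat.mul_add_mod, Nat.mul_add_div (by omega),
      Nat.mod_eq_of_lt (by omega), Nat.div_eq_of_lt (by omega), Nat.add_zero, ih]
    ring

lemma ds_min_multiple (hp : p.Prime) {a : ℕ} (ha : 1 ≤ a) :
    ∀ N, 0 < N → (p ^ a - 1) ∣ N → a * (p - 1) ≤ digitSum p N := by
  have hp2 := hp.two_le
  have hpa : 2 ≤ p ^ a := by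
    calc 2 = 2 ^ 1 := by norm_num
    _ ≤ p ^ a := Nat.pow_le_pow_left (by omega) 1 |>.trans (Nat.pow_le_pow_right (by omega) ha)
  intro N
  induction N using Nat.strong_induction_on with
  | _ N ih =>
  intro hN hdvd
  rcases lt_or_ge N (p ^ a) with hlt | hge
  · obtain ⟨c, hc⟩ := hdvd
    have hc1 : c = 1 := by
      rcases c with _ | _ | c
      · omega
      · rfl
      · exfalso
        have h2 : (p ^ a - 1) * 2 ≤ (p ^ a - 1) * (c + 1 + 1) :=
          Nat.mul_le_mul_left _ (by omega)
        omega
    subst hc1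
    rw [hc, mul_one, ds_pow_sub_one hp2]
  · obtain ⟨q, r, hrlt, hq1, hNqr⟩ : ∃ q r, r < p ^ a ∧ 1 ≤ q ∧ N = q * p ^ a + r :=
      ⟨N / p ^ a, N % p ^ a, Nat.mod_lt _ (by omega),
        (Nat.one_le_div_iff (by omega)).mpr hge,
        by rw [Nat.add_comm]; exact (Nat.mod_add_div' N _).symm⟩
    have hdsN : digitSum p N = digitSum p q + digitSum p r := by
      rw [hNqr]; exact ds_base hp2 a q r hrlt
    have hmulq : q * (p ^ a - 1) + q = q * p ^ a := by
      rw [← Nat.mul_succ]; congr 1; omega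
    have hdvd' : (p ^ a - 1) ∣ (q + r) := by
      have h1 : (p ^ a - 1) ∣ q * (p ^ a - 1) := Dvd.intro_left q rfl
      have h2 : q + r = N - q * (p ^ a - 1) := by omega
      rw [h2]; exact Nat.dvd_sub hdvd h1
    have hlt' : q + r < N := by
      have : q * 2 ≤ q * p ^ a := Nat.mul_le_mul_left _ (by omega)
      omega
    have := ih (q + r) hlt' (by omega) hdvd'
    have := ds_add_le hp q r
    omega

end

section
variable {p : ℕ}

lemma ds_sum_le (hp : p.Prime) {ι : Type*} (u : Finset ι) (f : ι → ℕ) :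
    digitSum p (∑ m ∈ u, f m) ≤ ∑ m ∈ u, digitSum p (f m) := by
  induction u using Finset.cons_induction with
  | empty => simp [ds_zero]
  | cons x u hx ih =>
    rw [Finset.sum_cons, Finset.sum_cons]
    exact le_trans (ds_add_le hp _ _) (by omega)

lemma ds_sum_eq_nocarry (hp : p.Prime) {ι : Type*} {u : Finset ι} {f : ι → ℕ}
    (h : digitSum p (∑ m ∈ u, f m) = ∑ m ∈ u, digitSum p (f m)) (i : ℕ) :
    (∑ m ∈ u, f m) / p ^ i = ∑ m ∈ u, f m / p ^ i := by
  induction u using Finset.cons_induction with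
  | empty => simp
  | cons x u hx ih =>
    rw [Finset.sum_cons] at h ⊢
    have h1 := ds_add_le hp (f x) (∑ m ∈ u, f m)
    have h2 := ds_sum_le hp u f
    have heq1 : digitSum p (f x + ∑ m ∈ u, f m)
        = digitSum p (f x) + digitSum p (∑ m ∈ u, f m) := by
      rw [Finset.sum_cons] at h; omega
    have heq2 : digitSum p (∑ m ∈ u, f m) = ∑ m ∈ u, digitSum p (f m) := by
      rw [Finset.sum_cons] at h; omega
    rw [ds_add_eq_nocarry hp heq1 i, ih heq2, Finset.sum_cons]

lemma ds_mul_le (hp : p.Prime) (t x : ℕ) : digitSum p (t * x) ≤ t * digitSum p x := by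
  have h : t * x = ∑ _m ∈ Finset.range t, x := by simp [Finset.sum_const, mul_comm]
  rw [h]
  calc digitSum p (∑ _m ∈ Finset.range t, x) ≤ ∑ _m ∈ Finset.range t, digitSum p x :=
    ds_sum_le hp _ _
  _ = t * digitSum p x := by simp [mul_comm]

lemma ds_mul_eq_nocarry (hp : p.Prime) {t x : ℕ}
    (h : digitSum p (t * x) = t * digitSum p x) (i : ℕ) :
    (t * x) / p ^ i = t * (x / p ^ i) := by
  have h1 : t * x = ∑ _m ∈ Finset.range t, x := by simp [Finset.sum_const, mul_comm]
  have h2 : t * digitSum p x = ∑ _m ∈ Finset.range t, digitSum p x := by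
    simp [Finset.sum_const, mul_comm]
  rw [h1]
  rw [ds_sum_eq_nocarry hp (by rw [← h1, ← h2]; exact h) i]
  simp [Finset.sum_const, mul_comm]

lemma geom_mul (p k : ℕ) (hp2 : 2 ≤ p) :
    ∀ q : ℕ, (p ^ k - 1) * ∑ i ∈ Finset.range q, p ^ (k * i) = p ^ (k * q) - 1 := by
  intro q
  induction q with
  | zero => simp
  | succ q ih =>
    rw [Finset.sum_range_succ, Nat.mul_add, ih]
    have h1 : 1 ≤ p ^ (k * q) := Nat.one_le_pow _ _ (by omega)
    have h2 : p ^ (k * q) * p ^ k = p ^ (k * (q + 1)) := by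
      rw [← pow_add]; ring_nf
    have h3 : (p ^ k - 1) * p ^ (k * q) = p ^ (k * q) * p ^ k - p ^ (k * q) := by
      rw [Nat.sub_mul, one_mul, mul_comm]
    have h4 : 1 ≤ p ^ k := Nat.one_le_pow _ _ (by omega)
    have h5 : p ^ (k * q) ≤ p ^ (k * q) * p ^ k := Nat.le_mul_of_pos_right _ (by omega)
    omega

lemma sum_windows (k : ℕ) (f : ℕ → ℕ) :
    ∀ q : ℕ, ∑ j ∈ Finset.range (k * q), f j
      = ∑ m ∈ Finset.range q, ∑ j ∈ Finset.Ico (k * m) (k * m + k), f j := by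
  intro q
  induction q with
  | zero => simp
  | succ q ih =>
    rw [Finset.sum_range_succ, ← ih, Finset.range_eq_Ico,
      show k * (q + 1) = k * q + k from by ring,
      ← Finset.sum_Ico_consecutive f (Nat.zero_le _) (Nat.le_add_right _ _), Finset.range_eq_Ico]

lemma pow_sub_one_div (hp2 : 2 ≤ p) {d k : ℕ} (hd : d ≤ k) :
    (p ^ k - 1) / p ^ d = p ^ (k - d) - 1 := by
  have h1 : p ^ d * p ^ (k - d) = p ^ k := by rw [← pow_add]; congr 1; omega
  have h2 : 1 ≤ p ^ (k - d) := Nat.one_le_pow _ _ (by omega)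
  have h3 : 1 ≤ p ^ d := Nat.one_le_pow _ _ (by omega)
  have h4 : p ^ d * (p ^ (k - d) - 1) + p ^ d = p ^ d * p ^ (k - d) := by
    rw [← Nat.mul_succ]; congr 1; omega
  have hsplit : p ^ k - 1 = p ^ d * (p ^ (k - d) - 1) + (p ^ d - 1) := by omega
  rw [hsplit, Nat.mul_add_div (by omega), Nat.div_eq_of_lt (by omega), Nat.add_zero]

lemma pow_sub_one_mod (hp2 : 2 ≤ p) {e : ℕ} (he : 1 ≤ e) : (p ^ e - 1) % p = p - 1 := by
  have h1 : 1 ≤ p ^ (e - 1) := Nat.one_le_pow _ _ (by omega)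
  have h2 : p * p ^ (e - 1) = p ^ e := by rw [← pow_succ']; congr 1; omega
  have h4 : p * (p ^ (e - 1) - 1) + p = p * p ^ (e - 1) := by
    rw [← Nat.mul_succ]; congr 1; omega
  have hsplit : p ^ e - 1 = p * (p ^ (e - 1) - 1) + (p - 1) := by omega
  rw [hsplit, Nat.mul_add_mod, Nat.mod_eq_of_lt (by omega)]

end

section
variable {p a k : ℕ} {S : Finset ℕ}

lemma isRepr_zero : IsRepr p a S 0 0 := ⟨fun _ _ => 0, by simp, by simp⟩

lemma isRepr_add {N₁ N₂ m₁ m₂ : ℕ} (h1 : IsRepr p a S N₁ m₁) (h2 : IsRepr p a S N₂ m₂) :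
    IsRepr p a S (N₁ + N₂) (m₁ + m₂) := by
  obtain ⟨t1, ht1, hm1⟩ := h1; obtain ⟨t2, ht2, hm2⟩ := h2
  refine ⟨fun i j => t1 i j + t2 i j, ?_, ?_⟩
  · simp only [Nat.add_mul, Finset.sum_add_distrib, ht1, ht2]
  · simp only [Finset.sum_add_distrib, hm1, hm2]

lemma isRepr_single {i₀ j₀ : ℕ} (hi : i₀ ∈ S) (hj : j₀ < a) :
    IsRepr p a S (i₀ * p ^ j₀) 1 := by
  refine ⟨fun i j => if i = i₀ then (if j = j₀ then 1 else 0) else 0, ?_, ?_⟩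
  · have h1 : ∀ i ∈ S, (∑ j ∈ Finset.range a,
        (if i = i₀ then (if j = j₀ then 1 else 0) else 0) * (i * p ^ j))
        = if i = i₀ then i * p ^ j₀ else 0 := by
      intro i _
      split_ifs with h
      · simp only [ite_mul, one_mul, zero_mul]
        rw [Finset.sum_ite_eq' (Finset.range a) j₀ (fun j => i * p ^ j)]
        simp [Finset.mem_range, hj]
      · simp
    rw [Finset.sum_congr rfl h1, Finset.sum_ite_eq' S i₀ (fun i => i * p ^ j₀)]
    simp [hi]
  · have h1 : ∀ i ∈ S, (∑ j ∈ Finset.range a,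
        (if i = i₀ then (if j = j₀ then 1 else 0) else 0))
        = if i = i₀ then 1 else 0 := by
      intro i _
      split_ifs with h
      · rw [Finset.sum_ite_eq' (Finset.range a) j₀ (fun _ => 1)]
        simp [Finset.mem_range, hj]
      · simp
    rw [Finset.sum_congr rfl h1, Finset.sum_ite_eq' S i₀ (fun _ => 1)]
    simp [hi]

lemma isRepr_nsmul {N m : ℕ} (h : IsRepr p a S N m) (c : ℕ) : IsRepr p a S (c * N) (c * m) := by
  induction c with
  | zero => simpa using isRepr_zero
  | succ c ih =>
    have := isRepr_add ih h
    simpa [Nat.succ_mul] using this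

lemma isRepr_pow_sub_one (hp2 : 2 ≤ p) (hν : p ^ k - 1 ∈ S) (hk : 0 < k) {r : ℕ} (hr : r < k) :
    ∀ q, k * q ≤ a → IsRepr p a S ((p ^ (k * q) - 1) * p ^ r) q := by
  intro q
  induction q with
  | zero => simpa using isRepr_zero
  | succ q ih =>
    intro hqa
    have hkq : k * q ≤ a := by
      have : k * q ≤ k * (q + 1) := Nat.mul_le_mul_left _ (by omega)
      omega
    have hja : k * q + r < a := by
      have : k * (q + 1) = k * q + k := by ring
      omega
    have key : (p ^ (k * (q + 1)) - 1) * p ^ r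
        = (p ^ (k * q) - 1) * p ^ r + (p ^ k - 1) * p ^ (k * q + r) := by
      have e1 : p ^ (k * (q + 1)) = p ^ (k * q) * p ^ k := by rw [← pow_add]; ring_nf
      have e2 : p ^ (k * q + r) = p ^ (k * q) * p ^ r := by rw [← pow_add]
      have hA : 1 ≤ p ^ (k * q) := Nat.one_le_pow _ _ (by omega)
      have hB : 1 ≤ p ^ k := Nat.one_le_pow _ _ (by omega)
      have hP : 1 ≤ p ^ r := Nat.one_le_pow _ _ (by omega)
      rw [e1, e2, Nat.sub_mul, Nat.sub_mul, Nat.sub_mul, one_mul]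
      have h3 : p ^ (k * q) * p ^ k * p ^ r = p ^ k * (p ^ (k * q) * p ^ r) := by ring
      have h4 : p ^ r ≤ p ^ (k * q) * p ^ r := Nat.le_mul_of_pos_left _ (by omega)
      have h5 : p ^ (k * q) * p ^ r ≤ p ^ (k * q) * p ^ k * p ^ r := by
        rw [h3]; exact Nat.le_mul_of_pos_left _ (by omega)
      omega
    rw [key, show q + 1 = q + 1 from rfl]
    exact isRepr_add (ih hkq) (isRepr_single hν hja)

lemma isRepr_ds_le (hp : p.Prime) {B N m : ℕ} (hB : ∀ i ∈ S, digitSum p i ≤ B)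
    (h : IsRepr p a S N m) : digitSum p N ≤ m * B := by
  obtain ⟨t, htN, htm⟩ := h
  have hNP : N = ∑ x ∈ S ×ˢ Finset.range a, t x.1 x.2 * (x.1 * p ^ x.2) := by
    rw [Finset.sum_product]; exact htN.symm
  have hmP : m = ∑ x ∈ S ×ˢ Finset.range a, t x.1 x.2 := by
    rw [Finset.sum_product]; exact htm.symm
  calc digitSum p N ≤ ∑ x ∈ S ×ˢ Finset.range a, digitSum p (t x.1 x.2 * (x.1 * p ^ x.2)) := by
        rw [hNP]; exact ds_sum_le hp _ _
  _ ≤ ∑ x ∈ S ×ˢ Finset.range a, t x.1 x.2 * B := by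
      apply Finset.sum_le_sum
      intro x hx
      have hxS : x.1 ∈ S := (Finset.mem_product.mp hx).1
      calc digitSum p (t x.1 x.2 * (x.1 * p ^ x.2)) ≤ t x.1 x.2 * digitSum p (x.1 * p ^ x.2) :=
            ds_mul_le hp _ _
      _ = t x.1 x.2 * digitSum p x.1 := by rw [ds_mul_pow hp.two_le]
      _ ≤ t x.1 x.2 * B := Nat.mul_le_mul_left _ (hB x.1 hxS)
  _ = m * B := by rw [← Finset.sum_mul, ← hmP]

end

set_option maxHeartbeats 1000000 in
theorem pk_sub_one_case (p a k : ℕ) (hp : p.Prime) (ha : 1 ≤ a) (hk : 0 < k)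
    (hka : k ∣ a)
    (S : Finset ℕ) (hS : ∀ i ∈ S, 0 < i ∧ Nat.Coprime i p)
    (hν : p ^ k - 1 ∈ S)
    (hmax : ∀ i ∈ S, i ≠ p ^ k - 1 → digitSum p i < digitSum p (p ^ k - 1))
    (ℓ : ℕ) (hℓ : 0 < ℓ) :
    MC p a S ((p ^ a - 1) * ℓ) * k = a ↔ ∃ r < k, ℓ = p ^ r := by
  have hp2 := hp.two_le
  obtain ⟨q, rfl⟩ := hka
  have hq : 1 ≤ q := by
    rcases Nat.eq_zero_or_pos q with rfl | h
    · omega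
    · exact h
  have hpk : 2 ≤ p ^ k := by
    calc 2 = 2 ^ 1 := by norm_num
    _ ≤ p ^ k := le_trans (Nat.pow_le_pow_left (by omega) 1) (Nat.pow_le_pow_right (by omega) hk)
  have hpa : 2 ≤ p ^ (k * q) := by
    calc 2 ≤ p ^ k := hpk
    _ ≤ p ^ (k * q) := Nat.pow_le_pow_right (by omega) (by nlinarith)
  have hdsν : digitSum p (p ^ k - 1) = k * (p - 1) := ds_pow_sub_one hp2 k
  have hB : ∀ i ∈ S, digitSum p i ≤ k * (p - 1) := by
    intro i hi
    by_cases h : i = p ^ k - 1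
    · rw [h, hdsν]
    · have := hmax i hi h; omega
  set N := (p ^ (k * q) - 1) * ℓ with hNdef
  have hNpos : 0 < N := by
    have : 1 ≤ p ^ (k * q) - 1 := by omega
    positivity
  set R := ∑ i ∈ Finset.range q, p ^ (k * i) with hRdef
  have hgeom : (p ^ k - 1) * R = p ^ (k * q) - 1 := geom_mul p k hp2 q
  have hRpos : 0 < R := by
    apply Finset.sum_pos
    · intro i _; positivity
    · rw [Finset.nonempty_range_iff]; omega
  have hmem0 : IsRepr p (k * q) S N (R * ℓ) := by
    have h1 : IsRepr p (k * q) S ((p ^ k - 1) * p ^ 0) 1 := isRepr_single hν (by positivity)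
    have h2 := isRepr_nsmul h1 (R * ℓ)
    have h3 : R * ℓ * ((p ^ k - 1) * p ^ 0) = N := by
      rw [hNdef, ← hgeom]; ring
    rw [h3, Nat.mul_one] at h2
    exact h2
  have hne : {m | IsRepr p (k * q) S N m}.Nonempty := ⟨R * ℓ, hmem0⟩
  have hm : IsRepr p (k * q) S N (MC p (k * q) S N) := Nat.sInf_mem hne
  have hdsmin : (k * q) * (p - 1) ≤ digitSum p N :=
    ds_min_multiple hp ha N hNpos ⟨ℓ, rfl⟩
  have hMClow : k * q ≤ MC p (k * q) S N * k := by
    have h1 := isRepr_ds_le hp hB hm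
    have h2 : (k * q) * (p - 1) ≤ (MC p (k * q) S N * k) * (p - 1) := by
      calc (k * q) * (p - 1) ≤ digitSum p N := hdsmin
      _ ≤ MC p (k * q) S N * (k * (p - 1)) := h1
      _ = (MC p (k * q) S N * k) * (p - 1) := by ring
    exact Nat.le_of_mul_le_mul_right h2 (by omega)
  constructor
  · intro hMC
    obtain ⟨t, htN, htm⟩ := hm
    set m := MC p (k * q) S N with hmdef
    set P := S ×ˢ Finset.range (k * q) with hPdef
    have hNP : ∑ x ∈ P, t x.1 x.2 * (x.1 * p ^ x.2) = N := by
      rw [hPdef, Finset.sum_product]; exact htN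
    have hmp : ∑ x ∈ P, t x.1 x.2 = m := by
      rw [hPdef, Finset.sum_product]; exact htm
    have hpt23 : ∀ x ∈ P, digitSum p (t x.1 x.2 * (x.1 * p ^ x.2))
        ≤ t x.1 x.2 * digitSum p x.1 := by
      intro x _
      calc digitSum p (t x.1 x.2 * (x.1 * p ^ x.2))
          ≤ t x.1 x.2 * digitSum p (x.1 * p ^ x.2) := ds_mul_le hp _ _
      _ = t x.1 x.2 * digitSum p x.1 := by rw [ds_mul_pow hp2]
    have hpt34 : ∀ x ∈ P, t x.1 x.2 * digitSum p x.1 ≤ t x.1 x.2 * (k * (p - 1)) := by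
      intro x hx
      exact Nat.mul_le_mul_left _ (hB x.1 (Finset.mem_product.mp hx).1)
    have h12 : digitSum p N ≤ ∑ x ∈ P, digitSum p (t x.1 x.2 * (x.1 * p ^ x.2)) := by
      conv_lhs => rw [← hNP]
      exact ds_sum_le hp _ _
    have h23 : ∑ x ∈ P, digitSum p (t x.1 x.2 * (x.1 * p ^ x.2))
        ≤ ∑ x ∈ P, t x.1 x.2 * digitSum p x.1 := Finset.sum_le_sum hpt23
    have h34 : ∑ x ∈ P, t x.1 x.2 * digitSum p x.1
        ≤ ∑ x ∈ P, t x.1 x.2 * (k * (p - 1)) := Finset.sum_le_sum hpt34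
    have hA4 : ∑ x ∈ P, t x.1 x.2 * (k * (p - 1)) = (k * q) * (p - 1) := by
      rw [← Finset.sum_mul, hmp]
      calc m * (k * (p - 1)) = (m * k) * (p - 1) := by ring
      _ = (k * q) * (p - 1) := by rw [hMC]
    have hA12 : digitSum p N = ∑ x ∈ P, digitSum p (t x.1 x.2 * (x.1 * p ^ x.2)) := by omega
    have hA23 : ∑ x ∈ P, digitSum p (t x.1 x.2 * (x.1 * p ^ x.2))
        = ∑ x ∈ P, t x.1 x.2 * digitSum p x.1 := by omega
    have hA34 : ∑ x ∈ P, t x.1 x.2 * digitSum p x.1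
        = ∑ x ∈ P, t x.1 x.2 * (k * (p - 1)) := by omega
    have hpteq34 := (Finset.sum_eq_sum_iff_of_le hpt34).mp hA34
    have hpteq23 := (Finset.sum_eq_sum_iff_of_le hpt23).mp hA23
    have hzero : ∀ i ∈ S, i ≠ p ^ k - 1 → ∀ j, j < k * q → t i j = 0 := by
      intro i hi hine j hj
      have hx : (i, j) ∈ P := Finset.mem_product.mpr ⟨hi, Finset.mem_range.mpr hj⟩
      have h := hpteq34 (i, j) hx
      dsimp only at h
      have hlt : digitSum p i < k * (p - 1) := by have := hmax i hi hine; omega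
      have h2 : t i j * (digitSum p i + 1) ≤ t i j * (k * (p - 1)) :=
        Nat.mul_le_mul_left _ (by omega)
      rw [Nat.mul_add, Nat.mul_one] at h2
      omega
    have hrowzero : ∀ i ∈ S, i ≠ p ^ k - 1 →
        ∀ (g : ℕ → ℕ → ℕ), ∑ j ∈ Finset.range (k * q), t i j * g i j = 0 := by
      intro i hi hine g
      exact Finset.sum_eq_zero fun j hj => by
        rw [hzero i hi hine j (Finset.mem_range.mp hj), zero_mul]
    have hNT : ∑ j ∈ Finset.range (k * q), t (p ^ k - 1) j * ((p ^ k - 1) * p ^ j) = N := by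
      rw [← htN, Finset.sum_eq_single_of_mem _ hν
        (fun i hi hine => hrowzero i hi hine (fun i j => i * p ^ j))]
    have hmT : ∑ j ∈ Finset.range (k * q), t (p ^ k - 1) j = m := by
      rw [← htm, Finset.sum_eq_single_of_mem _ hν (fun i hi hine => by
        exact Finset.sum_eq_zero fun j hj => hzero i hi hine j (Finset.mem_range.mp hj))]
    have hdivP : ∀ w, N / p ^ w = ∑ x ∈ P, (t x.1 x.2 * (x.1 * p ^ x.2)) / p ^ w := by
      intro w
      conv_lhs => rw [← hNP]
      exact ds_sum_eq_nocarry hp (by rw [hNP]; exact hA12) w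
    have hdivT : ∀ w, N / p ^ w
        = ∑ j ∈ Finset.range (k * q), t (p ^ k - 1) j * ((p ^ k - 1) * p ^ j / p ^ w) := by
      intro w
      rw [hdivP w]
      have hterm : ∀ x ∈ P, (t x.1 x.2 * (x.1 * p ^ x.2)) / p ^ w
          = t x.1 x.2 * ((x.1 * p ^ x.2) / p ^ w) := by
        intro x hx
        apply ds_mul_eq_nocarry hp
        rw [ds_mul_pow hp2]
        exact hpteq23 x hx
      rw [Finset.sum_congr rfl hterm, hPdef, Finset.sum_product,
        Finset.sum_eq_single_of_mem _ hν
          (fun i hi hine => hrowzero i hi hine (fun i j => i * p ^ j / p ^ w))]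
    have hdig : ∀ w, N / p ^ w % p
        = ∑ j ∈ Finset.range (k * q), t (p ^ k - 1) j * ((p ^ k - 1) * p ^ j / p ^ w % p) := by
      intro w
      have hsplit : ∀ c : ℕ, c / p ^ w = p * (c / p ^ (w + 1)) + c / p ^ w % p := by
        intro c
        conv_lhs => rw [← Nat.div_add_mod (c / p ^ w) p]
        congr 2
        rw [pow_succ, ← Nat.div_div_eq_div_mul]
      have h1 := hdivT w
      have h2 := hdivT (w + 1)
      rw [hsplit N] at h1
      have h3 : ∑ j ∈ Finset.range (k * q), t (p ^ k - 1) j * ((p ^ k - 1) * p ^ j / p ^ w)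
          = p * (∑ j ∈ Finset.range (k * q),
              t (p ^ k - 1) j * ((p ^ k - 1) * p ^ j / p ^ (w + 1)))
            + ∑ j ∈ Finset.range (k * q),
              t (p ^ k - 1) j * ((p ^ k - 1) * p ^ j / p ^ w % p) := by
        rw [Finset.mul_sum, ← Finset.sum_add_distrib]
        apply Finset.sum_congr rfl
        intro j _
        conv_lhs => rw [hsplit ((p ^ k - 1) * p ^ j)]
        ring
      rw [h3, ← h2] at h1
      omega
    have hcoin_digit : ∀ i j : ℕ, j ≤ i → i < j + k →
        (p ^ k - 1) * p ^ j / p ^ i % p = p - 1 := by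
      intro i j hji hij
      have h1 : p ^ i = p ^ j * p ^ (i - j) := by rw [← pow_add]; congr 1; omega
      rw [h1, ← Nat.div_div_eq_div_mul,
        Nat.mul_div_cancel _ (pow_pos (by omega : 0 < p) j),
        pow_sub_one_div hp2 (by omega : i - j ≤ k)]
      exact pow_sub_one_mod hp2 (by omega)
    have hwin : ∀ m', m' < q → ∑ j ∈ Finset.Ico (k * m') (k * m' + k), t (p ^ k - 1) j ≤ 1 := by
      intro m' hm'
      have hIsub : Finset.Ico (k * m') (k * m' + k) ⊆ Finset.range (k * q) := by
        intro j hj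
        rw [Finset.mem_range]
        rw [Finset.mem_Ico] at hj
        have h1 : k * (m' + 1) ≤ k * q := Nat.mul_le_mul_left _ (by omega)
        have h2 : k * (m' + 1) = k * m' + k := by ring
        omega
      have hlow : ∑ j ∈ Finset.Ico (k * m') (k * m' + k), t (p ^ k - 1) j * (p - 1)
          ≤ N / p ^ (k * m' + (k - 1)) % p := by
        rw [hdig (k * m' + (k - 1))]
        calc ∑ j ∈ Finset.Ico (k * m') (k * m' + k), t (p ^ k - 1) j * (p - 1)
            = ∑ j ∈ Finset.Ico (k * m') (k * m' + k),
              t (p ^ k - 1) j * ((p ^ k - 1) * p ^ j / p ^ (k * m' + (k - 1)) % p) := by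
              apply Finset.sum_congr rfl
              intro j hj
              rw [Finset.mem_Ico] at hj
              rw [hcoin_digit (k * m' + (k - 1)) j (by omega) (by omega)]
        _ ≤ _ := Finset.sum_le_sum_of_subset hIsub
      have hdlt : N / p ^ (k * m' + (k - 1)) % p < p := Nat.mod_lt _ (by omega)
      have h2 : (∑ j ∈ Finset.Ico (k * m') (k * m' + k), t (p ^ k - 1) j) * (p - 1)
          ≤ 1 * (p - 1) := by
        rw [one_mul, Finset.sum_mul]
        omega
      exact Nat.le_of_mul_le_mul_right h2 (by omega)
    set X := ∑ j ∈ Finset.range (k * q), t (p ^ k - 1) j * p ^ j with hXdef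
    have hνX : (p ^ k - 1) * X = N := by
      rw [hXdef, Finset.mul_sum, ← hNT]
      apply Finset.sum_congr rfl
      intro j _
      ring
    have hRX : R * ℓ = X := by
      apply Nat.eq_of_mul_eq_mul_left (show 0 < p ^ k - 1 by omega)
      rw [hνX, ← Nat.mul_assoc, hgeom]
    have hXle : X ≤ p ^ (k - 1) * R := by
      rw [hXdef, sum_windows k _ q, hRdef, Finset.mul_sum]
      apply Finset.sum_le_sum
      intro m' hm'
      calc ∑ j ∈ Finset.Ico (k * m') (k * m' + k), t (p ^ k - 1) j * p ^ j
          ≤ ∑ j ∈ Finset.Ico (k * m') (k * m' + k), t (p ^ k - 1) j * p ^ (k * m' + (k - 1)) := by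
            apply Finset.sum_le_sum
            intro j hj
            rw [Finset.mem_Ico] at hj
            exact Nat.mul_le_mul_left _ (Nat.pow_le_pow_right (by omega) (by omega))
      _ = (∑ j ∈ Finset.Ico (k * m') (k * m' + k), t (p ^ k - 1) j) * p ^ (k * m' + (k - 1)) :=
          (Finset.sum_mul _ _ _).symm
      _ ≤ 1 * p ^ (k * m' + (k - 1)) :=
          Nat.mul_le_mul_right _ (hwin m' (Finset.mem_range.mp hm'))
      _ = p ^ (k - 1) * p ^ (k * m') := by rw [one_mul, ← pow_add]; congr 1; omega
    have hlle : ℓ ≤ p ^ (k - 1) := by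
      have h1 : ℓ * R ≤ p ^ (k - 1) * R := by rw [Nat.mul_comm ℓ R, hRX]; exact hXle
      exact Nat.le_of_mul_le_mul_right h1 hRpos
    have hpk1 : p ^ (k - 1) < p ^ k := Nat.pow_lt_pow_right (by omega) (by omega)
    have hllt : ℓ < p ^ k := lt_of_le_of_lt hlle hpk1
    set X0 := ∑ j ∈ Finset.range k, t (p ^ k - 1) j * p ^ j with hX0def
    have hwin0 : ∑ j ∈ Finset.range k, t (p ^ k - 1) j ≤ 1 := by
      have h0 := hwin 0 (by omega)
      simp only [Nat.mul_zero, Nat.zero_add] at h0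
      rwa [← Finset.range_eq_Ico] at h0
    have hX0lt : X0 < p ^ k := by
      have h1 : X0 ≤ (∑ j ∈ Finset.range k, t (p ^ k - 1) j) * p ^ (k - 1) := by
        rw [hX0def, Finset.sum_mul]
        apply Finset.sum_le_sum
        intro j hj
        rw [Finset.mem_range] at hj
        exact Nat.mul_le_mul_left _ (Nat.pow_le_pow_right (by omega) (by omega))
      have h2 : (∑ j ∈ Finset.range k, t (p ^ k - 1) j) * p ^ (k - 1) ≤ 1 * p ^ (k - 1) :=
        Nat.mul_le_mul_right _ hwin0
      rw [one_mul] at h2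
      omega
    have hXmod : X % p ^ k = X0 := by
      have hkkq : k ≤ k * q := Nat.le_mul_of_pos_right k (by omega)
      have hsplit : X = X0 + ∑ j ∈ Finset.Ico k (k * q), t (p ^ k - 1) j * p ^ j := by
        rw [hXdef, hX0def, Finset.range_eq_Ico,
          ← Finset.sum_Ico_consecutive _ (Nat.zero_le k) hkkq, Finset.range_eq_Ico]
      have hdvd2 : ∀ j ∈ Finset.Ico k (k * q),
          t (p ^ k - 1) j * p ^ j = p ^ k * (t (p ^ k - 1) j * p ^ (j - k)) := by
        intro j hj
        rw [Finset.mem_Ico] at hj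
        have he : p ^ j = p ^ k * p ^ (j - k) := by rw [← pow_add]; congr 1; omega
        rw [he]; ring
      rw [hsplit, Finset.sum_congr rfl hdvd2, ← Finset.mul_sum,
        Nat.add_mul_mod_self_left, Nat.mod_eq_of_lt hX0lt]
    have hRmod : R % p ^ k = 1 := by
      have hsplit : R = 1 + ∑ i ∈ Finset.Ico 1 q, p ^ (k * i) := by
        rw [hRdef, Finset.range_eq_Ico,
          ← Finset.sum_Ico_consecutive _ (Nat.zero_le 1) (by omega : 1 ≤ q)]
        simp
      have hdvd2 : ∀ i ∈ Finset.Ico 1 q, p ^ (k * i) = p ^ k * p ^ (k * i - k) := by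
        intro i hi
        rw [Finset.mem_Ico] at hi
        rw [← pow_add]
        congr 1
        have : k ≤ k * i := Nat.le_mul_of_pos_right k (by omega)
        omega
      rw [hsplit, Finset.sum_congr rfl hdvd2, ← Finset.mul_sum,
        Nat.add_mul_mod_self_left, Nat.mod_eq_of_lt (by omega)]
    have hlX0 : ℓ = X0 := by
      have h1 : (R * ℓ) % p ^ k = ℓ % p ^ k := by
        rw [Nat.mul_mod, hRmod, one_mul, Nat.mod_mod_of_dvd _ dvd_rfl]
      rw [hRX, hXmod, Nat.mod_eq_of_lt hllt] at h1
      exact h1.symm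
    obtain ⟨j₀, hj₀mem, hj₀⟩ : ∃ j₀ ∈ Finset.range k, t (p ^ k - 1) j₀ * p ^ j₀ ≠ 0 := by
      apply Finset.exists_ne_zero_of_sum_ne_zero
      rw [← hX0def, ← hlX0]
      omega
    have hTj₀ : 1 ≤ t (p ^ k - 1) j₀ := by
      rcases Nat.eq_zero_or_pos (t (p ^ k - 1) j₀) with h | h
      · rw [h, zero_mul] at hj₀; omega
      · omega
    have hadd := Finset.add_sum_erase (Finset.range k) (t (p ^ k - 1)) hj₀mem
    have hothers : ∀ j ∈ Finset.range k, j ≠ j₀ → t (p ^ k - 1) j = 0 := by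
      intro j hj hjne
      have h2 : ∑ x ∈ (Finset.range k).erase j₀, t (p ^ k - 1) x = 0 := by omega
      exact (Finset.sum_eq_zero_iff).mp h2 j (Finset.mem_erase.mpr ⟨hjne, hj⟩)
    have hTj₀1 : t (p ^ k - 1) j₀ = 1 := by omega
    refine ⟨j₀, Finset.mem_range.mp hj₀mem, ?_⟩
    rw [hlX0, hX0def,
      Finset.sum_eq_single_of_mem j₀ hj₀mem
        (fun j hj hjne => by rw [hothers j hj hjne, zero_mul]),
      hTj₀1, one_mul]
  · rintro ⟨r, hr, rfl⟩
    have hup : MC p (k * q) S N ≤ q :=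
      Nat.sInf_le (isRepr_pow_sub_one hp2 hν hk hr q le_rfl)
    have h1 := Nat.mul_le_mul_right k hup
    have h2 : q * k = k * q := Nat.mul_comm q k
    omega
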